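/- Let 𝒥⁺, 𝒥⁻ be partitions of [1,n] into intervals. Let J_1⁺, J_2⁺ ∈ 𝒥⁺ and J_1⁻, J_2⁻ ∈ 𝒥⁻ with J_1⁺ ∩ J_1⁻ ≠ ∅ and J_2⁺ ∩ J_2⁻ ≠ ∅ defining distinct double components (i.e. J_1⁺ ≠ J_2⁺ or J_1⁻ ≠ J_2⁻). Suppose centre(J_1⁺) ≤ centre(J_1⁻) and centre(J_2⁺) ≥ centre(J_2⁻). Then for every b ∈ J_1⁺ ∩ J_1⁻ and every a ∈ J_2⁺ ∩ J_2⁻ one has ε_b − ε_a ∈ K. (Lemma 9.5, with the sink/source conditions on the end-points of straightened edges expressed by the centre inequalities; this is also the key case in the proofs of Lemmas 4.3.1 and 9.6.) -/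

import Mathlib

open Pointwise

noncomputable def eps (n : ℕ) (i : Fin n) : Fin n → ℝ := Pi.single i 1

/-- The roots of `sl_n`: `ε_i - ε_j` for `i ≠ j`. -/
def Delta (n : ℕ) : Set (Fin n → ℝ) :=
  {v | ∃ i j : Fin n, i ≠ j ∧ v = eps n i - eps n j}

/-- The positive roots: `ε_i - ε_j` for `i < j`. -/
def DeltaPos (n : ℕ) : Set (Fin n → ℝ) :=
  {v | ∃ i j : Fin n, i < j ∧ v = eps n i - eps n j}

/-- The negative roots. -/
def DeltaNeg (n : ℕ) : Set (Fin n → ℝ) := -DeltaPos n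

/-- The simple roots `α_i = ε_i - ε_{i+1}`. -/
def simpleRoots (n : ℕ) : Set (Fin n → ℝ) :=
  {v | ∃ i j : Fin n, (j : ℕ) = (i : ℕ) + 1 ∧ v = eps n i - eps n j}

/-- The set of ℕ-linear combinations of elements of `S`. -/
def Nspan {n : ℕ} (S : Set (Fin n → ℝ)) : Set (Fin n → ℝ) :=
  (AddSubmonoid.closure S : AddSubmonoid (Fin n → ℝ))

/-- `R = (ℕπ⁺ ∪ (−ℕπ⁻)) ∩ Δ`. -/
def Rset (n : ℕ) (Pp Pm : Set (Fin n → ℝ)) : Set (Fin n → ℝ) :=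
  (Nspan Pp ∪ -Nspan Pm) ∩ Delta n

/-- `K = Δ \ R`. -/
def Kset (n : ℕ) (Pp Pm : Set (Fin n → ℝ)) : Set (Fin n → ℝ) :=
  Delta n \ Rset n Pp Pm

/-- `M = R ∩ (−R)`. -/
def Mset (n : ℕ) (Pp Pm : Set (Fin n → ℝ)) : Set (Fin n → ℝ) :=
  Rset n Pp Pm ∩ -Rset n Pp Pm

/-- `R_* = (−R) \ M`. -/
def RstarSet (n : ℕ) (Pp Pm : Set (Fin n → ℝ)) : Set (Fin n → ℝ) :=
  -Rset n Pp Pm \ Mset n Pp Pm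

/-- A partition of `[1,n]` (as `Fin n`) into (nonempty) intervals. -/
def IsIntervalPartitionF (n : ℕ) (J : Set (Set (Fin n))) : Prop :=
  (∀ I ∈ J, ∃ a b : Fin n, a ≤ b ∧ I = Set.Icc a b) ∧
  (⋃₀ J = Set.univ) ∧
  (∀ I ∈ J, ∀ I' ∈ J, I ≠ I' → Disjoint I I')

/-- The set `π` of simple roots `α_i` such that `i` and `i+1` lie in a common component of the
partition `J`. -/
def piOf (n : ℕ) (J : Set (Set (Fin n))) : Set (Fin n → ℝ) :=
  {v | ∃ i j : Fin n, (j : ℕ) = (i : ℕ) + 1 ∧ v = eps n i - eps n j ∧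
    ∃ I ∈ J, i ∈ I ∧ j ∈ I}


noncomputable def Lsum (n t : ℕ) (x : Fin n → ℝ) : ℝ :=
  ∑ k ∈ Finset.univ.filter (fun k : Fin n => (k : ℕ) < t), x k

lemma Lsum_add (n t : ℕ) (x y : Fin n → ℝ) :
    Lsum n t (x + y) = Lsum n t x + Lsum n t y := by
  simp [Lsum, Finset.sum_add_distrib]

lemma Lsum_eps (n t : ℕ) (i : Fin n) :
    Lsum n t (eps n i) = if (i : ℕ) < t then 1 else 0 := by
  simp [Lsum, eps, Finset.sum_pi_single']

lemma Lsum_sub (n t : ℕ) (x y : Fin n → ℝ) :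
    Lsum n t (x - y) = Lsum n t x - Lsum n t y := by
  simp [Lsum, Finset.sum_sub_distrib]

lemma nspan_key (n : ℕ) (J : Set (Set (Fin n))) (t : ℕ) :
    ∀ x ∈ Nspan (piOf n J), 0 ≤ Lsum n t x ∧
      (0 < Lsum n t x →
        ∃ i j : Fin n, (j : ℕ) = (i : ℕ) + 1 ∧ (j : ℕ) = t ∧ ∃ I ∈ J, i ∈ I ∧ j ∈ I) := by
  intro x hx
  have hx' : x ∈ AddSubmonoid.closure (piOf n J) := hx
  induction hx' using AddSubmonoid.closure_induction with
  | mem y hy =>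
    obtain ⟨i, j, hji, rfl, I, hI, hiI, hjI⟩ := hy
    rw [Lsum_sub, Lsum_eps, Lsum_eps]
    by_cases h1 : (i : ℕ) < t <;> by_cases h2 : (j : ℕ) < t
    · simp [h1, h2]
    · refine ⟨by simp [h1, h2], fun _ => ⟨i, j, hji, ?_, I, hI, hiI, hjI⟩⟩
      omega
    · omega
    · simp [h1, h2]
  | zero => constructor <;> simp [Lsum]
  | add y z hy hz ihy ihz =>
    rw [Lsum_add]
    have Hy := ihy hy
    have Hz := ihz hz
    constructor
    · linarith [Hy.1, Hz.1]
    · intro hpos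
      rcases lt_or_ge 0 (Lsum n t y) with h | h
      · exact Hy.2 h
      · exact Hz.2 (by linarith [Hy.1])

lemma nspan_sub (n : ℕ) (J : Set (Set (Fin n))) (b a : Fin n)
    (h : eps n b - eps n a ∈ Nspan (piOf n J)) (hne : b ≠ a) :
    (b : ℕ) < (a : ℕ) ∧ ∀ k : ℕ, (b : ℕ) ≤ k → k < (a : ℕ) →
      ∃ i j : Fin n, (i : ℕ) = k ∧ (j : ℕ) = k + 1 ∧ ∃ I ∈ J, i ∈ I ∧ j ∈ I := by
  have hL : ∀ t : ℕ, Lsum n t (eps n b - eps n a) =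
      (if (b : ℕ) < t then (1 : ℝ) else 0) - (if (a : ℕ) < t then (1 : ℝ) else 0) := by
    intro t; rw [Lsum_sub, Lsum_eps, Lsum_eps]
  have hba : (b : ℕ) ≤ (a : ℕ) := by
    have := (nspan_key n J ((a : ℕ) + 1) _ h).1
    rw [hL] at this
    by_contra hc
    simp only [if_pos (by omega : (a : ℕ) < (a : ℕ) + 1),
      if_neg (by omega : ¬ (b : ℕ) < (a : ℕ) + 1)] at this
    linarith
  have hba' : (b : ℕ) < (a : ℕ) := by
    rcases lt_or_eq_of_le hba with h' | h'
    · exact h'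
    · exact absurd (Fin.ext h') hne
  refine ⟨hba', fun k hk1 hk2 => ?_⟩
  have := (nspan_key n J (k + 1) _ h).2
  rw [hL] at this
  have hpos : (0:ℝ) < (if (b : ℕ) < k + 1 then (1 : ℝ) else 0) -
      (if (a : ℕ) < k + 1 then (1 : ℝ) else 0) := by
    rw [if_pos (by omega), if_neg (by omega)]; norm_num
  obtain ⟨i, j, hji, hjt, I, hI, hiI, hjI⟩ := this hpos
  exact ⟨i, j, by omega, by omega, I, hI, hiI, hjI⟩

lemma comp_unique {n : ℕ} {J : Set (Set (Fin n))} (hJ : IsIntervalPartitionF n J)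
    {I I' : Set (Fin n)} (hI : I ∈ J) (hI' : I' ∈ J) {x : Fin n}
    (hx : x ∈ I) (hx' : x ∈ I') : I = I' := by
  by_contra hne
  exact (Set.disjoint_left.mp (hJ.2.2 I hI I' hI' hne)) hx hx'

lemma chain {n : ℕ} {J : Set (Set (Fin n))} (hJ : IsIntervalPartitionF n J)
    (b a : Fin n) (I : Set (Fin n)) (hI : I ∈ J) (hb : b ∈ I)
    (hstep : ∀ k : ℕ, (b : ℕ) ≤ k → k < (a : ℕ) →
      ∃ i j : Fin n, (i : ℕ) = k ∧ (j : ℕ) = k + 1 ∧ ∃ I' ∈ J, i ∈ I' ∧ j ∈ I')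
    (hba : (b : ℕ) ≤ (a : ℕ)) : a ∈ I := by
  have main : ∀ d : ℕ, (b : ℕ) + d ≤ (a : ℕ) → ∀ m : Fin n, (m : ℕ) = (b : ℕ) + d → m ∈ I := by
    intro d
    induction d with
    | zero =>
      intro _ m hm
      have : m = b := Fin.ext (by omega)
      rw [this]; exact hb
    | succ d ih =>
      intro hd m hm
      obtain ⟨i, j, hik, hjk, I', hI', hiI', hjI'⟩ :=
        hstep ((b : ℕ) + d) (by omega) (by omega)
      have hiI : i ∈ I := ih (by omega) i hik
      have : I = I' := comp_unique hJ hI hI' hiI hiI'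
      have hm' : m = j := Fin.ext (by omega)
      rw [hm', this]; exact hjI'
  exact main ((a : ℕ) - (b : ℕ)) (by omega) a (by omega)

lemma icc_eq_endpoints {n : ℕ} {a b c d : Fin n} (hab : a ≤ b) (hcd : c ≤ d)
    (h : Set.Icc a b = Set.Icc c d) : a = c ∧ b = d := by
  have ha : a ∈ Set.Icc c d := h ▸ Set.mem_Icc.mpr ⟨le_refl a, hab⟩
  have hc : c ∈ Set.Icc a b := h.symm ▸ Set.mem_Icc.mpr ⟨le_refl c, hcd⟩
  have hb : b ∈ Set.Icc c d := h ▸ Set.mem_Icc.mpr ⟨hab, le_refl b⟩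
  have hd : d ∈ Set.Icc a b := h.symm ▸ Set.mem_Icc.mpr ⟨hcd, le_refl d⟩
  simp only [Set.mem_Icc] at ha hc hb hd
  exact ⟨le_antisymm hc.1 ha.1, le_antisymm hb.2 hd.2⟩

/-- Lemma 9.5: if `b` lies in a double component `J₁⁺ ∩ J₁⁻` with `centre(J₁⁺) ≤ centre(J₁⁻)`,
`a` lies in a distinct double component `J₂⁺ ∩ J₂⁻` with `centre(J₂⁺) ≥ centre(J₂⁻)`, then
`ε_b − ε_a ∈ K`. Centres are compared via the sums of end-points. -/
theorem statement_13 (n : ℕ) (hn : 2 ≤ n)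
    (Jp Jm : Set (Set (Fin n)))
    (hJp : IsIntervalPartitionF n Jp) (hJm : IsIntervalPartitionF n Jm)
    (a1p b1p a2p b2p a1m b1m a2m b2m : Fin n)
    (h1p : Set.Icc a1p b1p ∈ Jp) (h2p : Set.Icc a2p b2p ∈ Jp)
    (h1m : Set.Icc a1m b1m ∈ Jm) (h2m : Set.Icc a2m b2m ∈ Jm)
    (h1a : a1p ≤ b1p) (h2a : a2p ≤ b2p) (h1b : a1m ≤ b1m) (h2b : a2m ≤ b2m)
    (h1ne : (Set.Icc a1p b1p ∩ Set.Icc a1m b1m).Nonempty)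
    (h2ne : (Set.Icc a2p b2p ∩ Set.Icc a2m b2m).Nonempty)
    (hdist : Set.Icc a1p b1p ≠ Set.Icc a2p b2p ∨ Set.Icc a1m b1m ≠ Set.Icc a2m b2m)
    (hc1 : (a1p : ℕ) + (b1p : ℕ) ≤ (a1m : ℕ) + (b1m : ℕ))
    (hc2 : (a2m : ℕ) + (b2m : ℕ) ≤ (a2p : ℕ) + (b2p : ℕ)) :
    ∀ b ∈ Set.Icc a1p b1p ∩ Set.Icc a1m b1m,
    ∀ a ∈ Set.Icc a2p b2p ∩ Set.Icc a2m b2m,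
      eps n b - eps n a ∈ Kset n (piOf n Jp) (piOf n Jm) :=
  fun b hb a ha => by
  obtain ⟨hb1, hb2⟩ := hb
  obtain ⟨ha1, ha2⟩ := ha
  -- b ≠ a
  have hne : b ≠ a := by
    rintro rfl
    have e1 : Set.Icc a1p b1p = Set.Icc a2p b2p := comp_unique hJp h1p h2p hb1 ha1
    have e2 : Set.Icc a1m b1m = Set.Icc a2m b2m := comp_unique hJm h1m h2m hb2 ha2
    rcases hdist with h | h <;> [exact h e1; exact h e2]
  constructor
  · exact ⟨b, a, hne, rfl⟩
  · rintro ⟨hmem, -⟩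
    rcases hmem with hmem | hmem
    · -- eps b - eps a ∈ Nspan π⁺ : b < a and a in the Jp-component of b
      obtain ⟨hba, hstep⟩ := nspan_sub n Jp b a hmem hne
      have haI : a ∈ Set.Icc a1p b1p := chain hJp b a _ h1p hb1 hstep (le_of_lt hba)
      have ep : Set.Icc a1p b1p = Set.Icc a2p b2p := comp_unique hJp h1p h2p haI ha1
      have hm_ne : Set.Icc a1m b1m ≠ Set.Icc a2m b2m := by
        rcases hdist with h | h
        · exact absurd ep h
        · exact h
      obtain ⟨e1, e2⟩ := icc_eq_endpoints h1a h2a ep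
      have hsum : (a2m : ℕ) + (b2m : ℕ) ≤ (a1m : ℕ) + (b1m : ℕ) := by
        rw [e1, e2] at hc1; omega
      have hdisj := Set.disjoint_left.mp (hJm.2.2 _ h1m _ h2m hm_ne)
      -- from disjointness: b1m < a2m or b2m < a1m
      have h1' : a1m ∉ Set.Icc a2m b2m := hdisj (Set.mem_Icc.mpr ⟨le_refl _, h1b⟩)
      have h2' : a2m ∉ Set.Icc a1m b1m :=
        fun hx => hdisj hx (Set.mem_Icc.mpr ⟨le_refl _, h2b⟩)
      simp only [Set.mem_Icc, not_and, not_le] at h1' h2'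
      simp only [Set.mem_Icc] at hb2 ha2
      rcases le_or_gt a2m a1m with hcmp | hcmp
      · have hlt : (b2m : ℕ) < (a1m : ℕ) := Fin.lt_iff_val_lt_val.mp (h1' hcmp)
        have : (a : ℕ) ≤ (b2m : ℕ) := Fin.le_iff_val_le_val.mp ha2.2
        have : (a1m : ℕ) ≤ (b : ℕ) := Fin.le_iff_val_le_val.mp hb2.1
        omega
      · have hlt : (b1m : ℕ) < (a2m : ℕ) := Fin.lt_iff_val_lt_val.mp (h2' (le_of_lt hcmp))
        have h1b' : (a1m : ℕ) ≤ (b1m : ℕ) := Fin.le_iff_val_le_val.mp h1b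
        have h2b' : (a2m : ℕ) ≤ (b2m : ℕ) := Fin.le_iff_val_le_val.mp h2b
        omega
    · -- eps b - eps a ∈ -Nspan π⁻ : a < b and b in the Jm-component of a
      rw [Set.mem_neg] at hmem
      have hmem' : eps n a - eps n b ∈ Nspan (piOf n Jm) := by
        have : -(eps n b - eps n a) = eps n a - eps n b := by ring
        rwa [this] at hmem
      obtain ⟨hab, hstep⟩ := nspan_sub n Jm a b hmem' (Ne.symm hne)
      have hbI : b ∈ Set.Icc a2m b2m := chain hJm a b _ h2m ha2 hstep (le_of_lt hab)
      have em : Set.Icc a1m b1m = Set.Icc a2m b2m := comp_unique hJm h1m h2m hb2 hbI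
      have hp_ne : Set.Icc a1p b1p ≠ Set.Icc a2p b2p := by
        rcases hdist with h | h
        · exact h
        · exact absurd em h
      obtain ⟨e1, e2⟩ := icc_eq_endpoints h1b h2b em
      have hsum : (a1p : ℕ) + (b1p : ℕ) ≤ (a2p : ℕ) + (b2p : ℕ) := by
        rw [e1, e2] at hc1; omega
      have hdisj := Set.disjoint_left.mp (hJp.2.2 _ h1p _ h2p hp_ne)
      have h1' : a1p ∉ Set.Icc a2p b2p := hdisj (Set.mem_Icc.mpr ⟨le_refl _, h1a⟩)
      have h2' : a2p ∉ Set.Icc a1p b1p :=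
        fun hx => hdisj hx (Set.mem_Icc.mpr ⟨le_refl _, h2a⟩)
      simp only [Set.mem_Icc, not_and, not_le] at h1' h2'
      simp only [Set.mem_Icc] at hb1 ha1
      rcases le_or_gt a2p a1p with hcmp | hcmp
      · have hlt : (b2p : ℕ) < (a1p : ℕ) := Fin.lt_iff_val_lt_val.mp (h1' hcmp)
        have h1a' : (a1p : ℕ) ≤ (b1p : ℕ) := Fin.le_iff_val_le_val.mp h1a
        have h2a' : (a2p : ℕ) ≤ (b2p : ℕ) := Fin.le_iff_val_le_val.mp h2a
        omega
      · have hlt : (b1p : ℕ) < (a2p : ℕ) := Fin.lt_iff_val_lt_val.mp (h2' (le_of_lt hcmp))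
        have : (b : ℕ) ≤ (b1p : ℕ) := Fin.le_iff_val_le_val.mp hb1.2
        have : (a2p : ℕ) ≤ (a : ℕ) := Fin.le_iff_val_le_val.mp ha1.1
        omega
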